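/- Let i : A ⊂ K be a small full dense subcategory of a cocomplete (hence complete) category K, with induced reflection L := Lan_y i ⊣ R := K(i−,−). Then the codensity monad T_i = Ran_i i of the inclusion is isomorphic, as a monad on K, to the monad L ∘ Spec ∘ O ∘ R induced by the composite adjunction O ∘ R ⊣ L ∘ Spec; in particular the codensity monad of any small full dense subcategory of a cocomplete category is induced by the Isbell adjunction via conjugation along the reflection. -/

import Mathlib

/-! STATEMENT 3: the codensity monad of a small full dense subcategory `i : A ⊂ K` of a
cocomplete category is isomorphic, as a monad, to the monad `L ∘ Spec ∘ O ∘ R` induced by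
the composite adjunction `O ∘ R ⊣ L ∘ Spec` obtained from the Isbell adjunction by
conjugation along the reflection `L = Lan_y i ⊣ R = K(i-,-)`. -/

namespace CategoryTheory

open Functor Limits

noncomputable section

universe w w₂ v v₂ u u₂

namespace Codensity

variable {C : Type u} [Category.{v} C] {D : Type u₂} [Category.{v₂} D]
  (F : C ⥤ D) [F.HasRightKanExtension F]

/-- The underlying endofunctor of the codensity monad of `F`: the right Kan
extension of `F` along itself. -/
abbrev T : D ⥤ D := F.rightKanExtension F

/-- The counit of the right Kan extension. -/
abbrev ε : F ⋙ T F ⟶ F := F.rightKanExtensionCounit F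

/-- The unit of the codensity monad. -/
def unit : 𝟭 D ⟶ T F :=
  (T F).liftOfIsRightKanExtension (ε F) (𝟭 D) F.rightUnitor.hom

/-- The multiplication of the codensity monad. -/
def mul : T F ⋙ T F ⟶ T F :=
  (T F).liftOfIsRightKanExtension (ε F) (T F ⋙ T F)
    ((Functor.associator F (T F) (T F)).inv ≫ whiskerRight (ε F) (T F) ≫ ε F)

lemma unit_fac (X : C) : (unit F).app (F.obj X) ≫ (ε F).app X = 𝟙 (F.obj X) := by
  simp [unit]

lemma mul_fac (X : C) :
    (mul F).app (F.obj X) ≫ (ε F).app X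
      = (T F).map ((ε F).app X) ≫ (ε F).app X := by
  have h := (T F).liftOfIsRightKanExtension_fac_app (ε F)
    (T F ⋙ T F) ((Functor.associator F (T F) (T F)).inv ≫ whiskerRight (ε F) (T F) ≫ ε F) X
  simp only [NatTrans.comp_app, Functor.associator_inv_app, whiskerRight_app,
    Functor.comp_obj, Category.id_comp] at h
  simpa [mul] using h

lemma left_unit' : whiskerLeft (T F) (unit F) ≫ mul F = (T F).rightUnitor.hom := by
  apply (T F).hom_ext_of_isRightKanExtension (ε F)
  ext X
  have h := (unit F).naturality ((ε F).app X)
  simp only [Functor.comp_obj, Functor.id_obj, Functor.id_map] at h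
  simp only [NatTrans.comp_app, whiskerLeft_app, Functor.rightUnitor_hom_app,
    Functor.comp_obj, Functor.id_obj, Category.id_comp, Category.assoc]
  rw [mul_fac, ← Category.assoc, ← h, Category.assoc, unit_fac]
  simp

lemma right_unit' : whiskerRight (unit F) (T F) ≫ mul F = (T F).leftUnitor.hom := by
  apply (T F).hom_ext_of_isRightKanExtension (ε F)
  ext X
  simp only [NatTrans.comp_app, whiskerRight_app, whiskerLeft_app, Functor.leftUnitor_hom_app,
    Functor.comp_obj, Functor.id_obj, Category.id_comp, Category.assoc]
  rw [mul_fac, ← Category.assoc, ← Functor.map_comp, unit_fac]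
  simp

lemma assoc' :
    whiskerRight (mul F) (T F) ≫ mul F
      = (Functor.associator _ _ _).hom ≫ whiskerLeft (T F) (mul F) ≫ mul F := by
  apply (T F).hom_ext_of_isRightKanExtension (ε F)
  ext X
  have h := (mul F).naturality ((ε F).app X)
  simp only [Functor.comp_obj, Functor.comp_map] at h
  simp only [NatTrans.comp_app, whiskerRight_app, whiskerLeft_app, Functor.associator_hom_app,
    Functor.comp_obj, Category.id_comp, Category.assoc]
  conv_lhs => rw [mul_fac, ← Category.assoc, ← Functor.map_comp, mul_fac, Functor.map_comp,
    Category.assoc]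
  conv_rhs => rw [mul_fac, ← Category.assoc, ← h, Category.assoc, mul_fac]

end Codensity

/-- The codensity monad of a functor `F`, defined as the right Kan extension of `F`
along itself, with its canonical monad structure. -/
def codensityMonad {C : Type u} [Category.{v} C] {D : Type u₂} [Category.{v₂} D]
    (F : C ⥤ D) [F.HasRightKanExtension F] : Monad D where
  toFunctor := Codensity.T F
  η := Codensity.unit F
  μ := Codensity.mul F
  left_unit X := by
    simpa using NatTrans.congr_app (Codensity.left_unit' F) X
  right_unit X := by
    simpa using NatTrans.congr_app (Codensity.right_unit' F) X
  assoc X := by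
    simpa using NatTrans.congr_app (Codensity.assoc' F) X

end

end CategoryTheory

universe v' u'

open CategoryTheory Functor Limits

noncomputable section

/-- The copresheaf embedding `y♯ : A ⥤ (Set^A)ᵒᵖ`, `a ↦ A(a, -)`. -/
def ysharp (A : Type u') [SmallCategory A] : A ⥤ (A ⥤ Type u')ᵒᵖ := coyoneda.rightOp

namespace IsbellAux
open Opposite
set_option linter.unusedSectionVars false

variable (A : Type u') [SmallCategory A] {K : Type v'} [Category.{u'} K] (i : A ⥤ K)

/-- contravariant co-nerve `k ↦ K(k, i ·)` -/
def Ncontra : Kᵒᵖ ⥤ (A ⥤ Type u') := coyoneda ⋙ (whiskeringLeft A K (Type u')).obj i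

/-- the co-nerve `N : K ⥤ (A ⥤ Type)ᵒᵖ`, `k ↦ op (b ↦ K(k, i b))` -/
def NN : K ⥤ (A ⥤ Type u')ᵒᵖ := (Ncontra A i).rightOp

lemma NN_obj_unop_obj (k : K) (b : A) :
    ((NN A i).obj k).unop.obj b = (k ⟶ i.obj b) := rfl

lemma NN_obj_unop_map (k : K) {b b' : A} (m : b ⟶ b') (g : k ⟶ i.obj b) :
    ((NN A i).obj k).unop.map m g = g ≫ i.map m := rfl

lemma NN_map_unop_app {k k' : K} (f : k ⟶ k') (b : A) (g : k' ⟶ i.obj b) :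
    ((NN A i).map f).unop.app b g = f ≫ g := rfl

variable [i.Full] [i.Faithful]

lemma NN_map_bijective (k : K) (b : A) :
    Function.Bijective (fun f : k ⟶ i.obj b => (NN A i).map f) := by
  constructor
  · intro f f' h
    have h2 := types_congr_hom (NatTrans.congr_app (congrArg Quiver.Hom.unop h) b) (𝟙 (i.obj b))
    simp only [NN_map_unop_app, Category.comp_id] at h2
    exact h2
  · intro h
    refine ⟨h.unop.app b (𝟙 (i.obj b)), ?_⟩
    apply Quiver.Hom.unop_inj
    ext b' g
    obtain ⟨m, rfl⟩ := i.map_surjective g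
    have h2 : h.unop.app b' (𝟙 (i.obj b) ≫ i.map m) = h.unop.app b (𝟙 (i.obj b)) ≫ i.map m :=
      types_congr_hom (h.unop.naturality m) (𝟙 (i.obj b))
    rw [Category.id_comp] at h2
    exact h2.symm


section lift
variable {A i}
variable {H' : K ⥤ (A ⥤ Type u')ᵒᵖ} (β : i ⋙ H' ⟶ i ⋙ NN A i)

/-- the distinguished elements determined by a transformation into the co-nerve -/
def sel (b : A) : ((H'.obj (i.obj b)).unop).obj b :=
  (β.app b).unop.app b (𝟙 (i.obj b))

lemma sel_spec {b b' : A} (m : b ⟶ b') :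
    ((H'.map (i.map m)).unop).app b' (sel β b') =
      ((H'.obj (i.obj b)).unop).map m (sel β b) := by
  have h1 : ((H'.map (i.map m)).unop).app b' (sel β b')
      = (β.app b).unop.app b' (i.map m ≫ 𝟙 (i.obj b')) :=
    types_congr_hom (NatTrans.congr_app (congrArg Quiver.Hom.unop (β.naturality m)) b')
      (𝟙 (i.obj b'))
  have h2 : (β.app b).unop.app b' (𝟙 (i.obj b) ≫ i.map m)
      = ((H'.obj (i.obj b)).unop).map m (sel β b) :=
    types_congr_hom ((β.app b).unop.naturality m) (𝟙 (i.obj b))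
  rw [Category.comp_id] at h1
  rw [Category.id_comp] at h2
  exact h1.trans h2

/-- the canonical lift of `β` through the co-nerve -/
def liftNN : H' ⟶ NN A i where
  app k := Quiver.Hom.op
    { app := fun b => TypeCat.ofHom (fun (f : k ⟶ i.obj b) => ((H'.map f).unop).app b (sel β b))
      naturality := by
        intro b b' m
        ext (f : k ⟶ i.obj b)
        show ((H'.map (f ≫ i.map m)).unop).app b' (sel β b')
          = ((H'.obj k).unop).map m (((H'.map f).unop).app b (sel β b))
        rw [H'.map_comp]
        simp only [unop_comp, NatTrans.comp_app, types_comp_apply]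
        rw [sel_spec β m]
        have h4 := types_congr_hom ((H'.map f).unop.naturality m) (sel β b)
        simp only [types_comp_apply] at h4
        exact h4 }
  naturality := by
    intro k k' f
    apply Quiver.Hom.unop_inj
    ext b (g : k' ⟶ i.obj b)
    show (H'.map f).unop.app b (((H'.map g).unop).app b (sel β b))
      = ((H'.map (f ≫ g)).unop).app b (sel β b)
    rw [H'.map_comp]
    rfl

lemma liftNN_fac : whiskerLeft i (liftNN β) = β := by
  ext a : 2
  apply Quiver.Hom.unop_inj
  ext b f
  obtain ⟨m, rfl⟩ := i.map_surjective f
  show ((H'.map (i.map m)).unop).app b (sel β b) = (β.app a).unop.app b (i.map m)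
  have h1 : ((H'.map (i.map m)).unop).app b (sel β b)
      = (β.app a).unop.app b (i.map m ≫ 𝟙 (i.obj b)) :=
    types_congr_hom (NatTrans.congr_app (congrArg Quiver.Hom.unop (β.naturality m)) b)
      (𝟙 (i.obj b))
  rw [Category.comp_id] at h1
  exact h1

lemma liftNN_unique (γ : H' ⟶ NN A i) (hγ : whiskerLeft i γ = β) : γ = liftNN β := by
  ext k : 2
  apply Quiver.Hom.unop_inj
  ext b (f : k ⟶ i.obj b)
  have h1 : (H'.map f).unop.app b ((γ.app (i.obj b)).unop.app b (𝟙 (i.obj b)))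
      = (γ.app k).unop.app b (f ≫ 𝟙 (i.obj b)) :=
    types_congr_hom (NatTrans.congr_app (congrArg Quiver.Hom.unop (γ.naturality f)) b)
      (𝟙 (i.obj b))
  have h2 : (γ.app (i.obj b)).unop.app b (𝟙 (i.obj b)) = sel β b := by
    rw [← hγ]; rfl
  rw [Category.comp_id, h2] at h1
  exact h1.symm

lemma NN_lift_exists_unique : ∃! γ : H' ⟶ NN A i, whiskerLeft i γ = β :=
  ⟨liftNN β, liftNN_fac β, fun γ h => liftNN_unique β γ h⟩

end lift

section Ntilde

/-- the concrete Isbell conjugation `P ↦ op (b ↦ Hom(P, y b))` -/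
def Ntilde : (Aᵒᵖ ⥤ Type u') ⥤ (A ⥤ Type u')ᵒᵖ :=
  (coyoneda ⋙ (whiskeringLeft A (Aᵒᵖ ⥤ Type u') (Type u')).obj yoneda).rightOp

lemma Ntilde_obj_unop_obj (P : Aᵒᵖ ⥤ Type u') (b : A) :
    ((Ntilde A).obj P).unop.obj b = (P ⟶ yoneda.obj b) := rfl

lemma Ntilde_obj_unop_map (P : Aᵒᵖ ⥤ Type u') {b b' : A} (m : b ⟶ b')
    (t : P ⟶ yoneda.obj b) : ((Ntilde A).obj P).unop.map m t = t ≫ yoneda.map m := rfl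

lemma Ntilde_map_unop_app {P P' : Aᵒᵖ ⥤ Type u'} (f : P ⟶ P') (b : A)
    (t : P' ⟶ yoneda.obj b) : ((Ntilde A).map f).unop.app b t = f ≫ t := rfl

/-- hom-set bijection for the adjunction `Ntilde ⊣ restrictedYoneda y♯` -/
def NtHomEquiv (P : Aᵒᵖ ⥤ Type u') (e : (A ⥤ Type u')ᵒᵖ) :
    ((Ntilde A).obj P ⟶ e) ≃ (P ⟶ ((yoneda ⋙ (whiskeringLeft _ _ (Type u')).obj (ysharp A).op)).obj e) where
  toFun g :=
    { app := fun a => TypeCat.ofHom (fun p => Quiver.Hom.op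
        { app := fun b => TypeCat.ofHom (fun x => (g.unop.app b x).app a p)
          naturality := by
            intro b b' m
            ext x
            have h : g.unop.app b' (e.unop.map m x) = g.unop.app b x ≫ yoneda.map m :=
              types_congr_hom (g.unop.naturality m) x
            exact congrArg (fun t : P ⟶ yoneda.obj b' => t.app a p) h })
      naturality := by
        intro a a' m
        ext p
        apply Quiver.Hom.unop_inj
        ext b x
        exact types_congr_hom ((g.unop.app b x).naturality m) p }
  invFun τ := Quiver.Hom.op
    { app := fun b => TypeCat.ofHom (fun x =>
        { app := fun a => TypeCat.ofHom (fun p => (τ.app a p).unop.app b x)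
          naturality := by
            intro a a' m
            ext p
            have h := types_congr_hom (τ.naturality m) p
            simp only [types_comp_apply] at h
            show (τ.app a' (P.map m p)).unop.app b x = _
            rw [h]
            rfl })
      naturality := by
        intro b b' m
        ext x
        refine NatTrans.ext (funext fun q => ?_)
        ext p
        exact types_congr_hom ((τ.app q p).unop.naturality m) x }
  left_inv g := by
    apply Quiver.Hom.unop_inj
    ext b x
    refine NatTrans.ext (funext fun a => ?_)
    ext p
    rfl
  right_inv τ := by
    ext a p
    apply Quiver.Hom.unop_inj
    ext b x
    rfl

/-- the adjunction `Ntilde ⊣ restrictedYoneda y♯` -/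
def adjNt : Ntilde A ⊣ (yoneda ⋙ (whiskeringLeft _ _ (Type u')).obj (ysharp A).op) :=
  Adjunction.mkOfHomEquiv
    { homEquiv := NtHomEquiv A
      homEquiv_naturality_left_symm := by
        intro P P' e f g
        apply Quiver.Hom.unop_inj
        ext b x
        rfl
      homEquiv_naturality_right := by
        intro P e e' g f
        ext a p
        apply Quiver.Hom.unop_inj
        ext b x
        rfl }

/-- the Yoneda lemma: `y♯ ≅ y ⋙ Ntilde` -/
def ysIso : ysharp A ≅ yoneda ⋙ Ntilde A :=
  NatIso.ofComponents (fun b => (NatIso.ofComponents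
    (fun c => Equiv.toIso (Yoneda.fullyFaithful.homEquiv (X := b) (Y := c)).symm)
    (by
      intro c c' m
      ext f
      apply yoneda.map_injective
      simp [Functor.FullyFaithful.homEquiv]) : _ ≅ coyoneda.obj (op b)).op)
    (by
      intro b b' g
      apply Quiver.Hom.unop_inj
      ext c (f : yoneda.obj b' ⟶ yoneda.obj c)
      apply yoneda.map_injective
      change yoneda.map (g ≫ Yoneda.fullyFaithful.preimage f)
        = yoneda.map (Yoneda.fullyFaithful.preimage (yoneda.map g ≫ f))
      rw [Functor.map_comp, Yoneda.fullyFaithful.map_preimage,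
        Yoneda.fullyFaithful.map_preimage])

lemma lke_transfer {C D H : Type*} [Category C] [Category D] [Category H] {L L' : C ⥤ D}
    (e : L ≅ L') {F : C ⥤ H} {F' : D ⥤ H} (α : F ⟶ L ⋙ F') [F'.IsLeftKanExtension α] :
    F'.IsLeftKanExtension (α ≫ whiskerRight e.hom F') :=
  ⟨⟨(IsInitial.isInitialIffObj (Functor.leftExtensionEquivalenceOfIso₁ e F).functor _).1
    (F'.isUniversalOfIsLeftKanExtension α)⟩⟩

lemma Ntilde_lke_u : (Ntilde A).IsLeftKanExtension
    ((ysIso A).hom ≫ whiskerRight uliftYonedaIsoYoneda.{u'}.inv (Ntilde A)) := by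
  have : PreservesColimitsOfSize.{u', u'} (Ntilde A) := (adjNt A).leftAdjoint_preservesColimits
  exact Presheaf.isLeftKanExtension_of_preservesColimits.{u'} (Ntilde A)
    ((ysIso A) ≪≫ isoWhiskerRight uliftYonedaIsoYoneda.{u'}.symm (Ntilde A))

/-- the left Kan extension of `y♯` along `y` is `Ntilde` -/
def lanIso : yoneda.leftKanExtension (ysharp A) ≅ Ntilde A :=
  haveI := Ntilde_lke_u A
  haveI := lke_transfer uliftYonedaIsoYoneda.{u'}
    ((ysIso A).hom ≫ whiskerRight uliftYonedaIsoYoneda.{u'}.inv (Ntilde A))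
  Functor.leftKanExtensionUnique _ (yoneda.leftKanExtensionUnit (ysharp A)) _
    (((ysIso A).hom ≫ whiskerRight uliftYonedaIsoYoneda.{u'}.inv (Ntilde A))
      ≫ whiskerRight uliftYonedaIsoYoneda.{u'}.hom (Ntilde A))

end Ntilde

section Theta

variable [((yoneda ⋙ (whiskeringLeft _ _ (Type u')).obj i.op)).Full] [((yoneda ⋙ (whiskeringLeft _ _ (Type u')).obj i.op)).Faithful]

/-- fully faithful structure on `i` -/
def ffi : i.FullyFaithful := Functor.FullyFaithful.ofFullyFaithful i

/-- fully faithful structure on the nerve (density!) -/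
def ffR : ((yoneda ⋙ (whiskeringLeft _ _ (Type u')).obj i.op)).FullyFaithful :=
  Functor.FullyFaithful.ofFullyFaithful _

/-- for `i` fully faithful, the nerve restricted to `A` is the Yoneda embedding -/
def rho : i ⋙ (yoneda ⋙ (whiskeringLeft _ _ (Type u')).obj i.op) ≅ yoneda :=
  NatIso.ofComponents (fun b => NatIso.ofComponents
    (fun a => Equiv.toIso ((ffi A i).homEquiv (X := a.unop) (Y := b)).symm)
      (by
        intro a a' m
        ext f
        apply i.map_injective
        simp [Functor.FullyFaithful.homEquiv]))
    (by
      intro b b' g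
      ext a f
      apply i.map_injective
      simp [Functor.FullyFaithful.homEquiv])

lemma rho_naturality (b b' : A) (m : b ⟶ b') :
    ((yoneda ⋙ (whiskeringLeft _ _ (Type u')).obj i.op)).map (i.map m) ≫ (rho A i).hom.app b'
      = (rho A i).hom.app b ≫ yoneda.map m := (rho A i).hom.naturality m

/-- the hom-equivalence underlying `isoRNt` -/
def dEquiv (k : K) (b : A) :
    (k ⟶ i.obj b) ≃ (((yoneda ⋙ (whiskeringLeft _ _ (Type u')).obj i.op)).obj k ⟶ yoneda.obj b) :=
  ((ffR A i).homEquiv).trans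
    { toFun := fun t => t ≫ (rho A i).hom.app b
      invFun := fun t => t ≫ (rho A i).inv.app b
      left_inv := fun t => by simp
      right_inv := fun t => by simp }

@[simp] lemma dEquiv_apply (k : K) (b : A) (f : k ⟶ i.obj b) :
    dEquiv A i k b f = ((yoneda ⋙ (whiskeringLeft _ _ (Type u')).obj i.op)).map f ≫ (rho A i).hom.app b := rfl

/-- pointwise comparison between the co-nerve and the conjugate of the nerve -/
def dIso (k : K) :
    (Ncontra A i).obj (op k) ≅
      (coyoneda ⋙ (whiskeringLeft A (Aᵒᵖ ⥤ Type u') (Type u')).obj yoneda).obj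
        (op (((yoneda ⋙ (whiskeringLeft _ _ (Type u')).obj i.op)).obj k)) :=
  NatIso.ofComponents (fun b => Equiv.toIso (dEquiv A i k b))
    (by
      intro b b' m
      ext (f : k ⟶ i.obj b)
      show dEquiv A i k b' (f ≫ i.map m) = dEquiv A i k b f ≫ yoneda.map m
      simp only [dEquiv_apply, Functor.map_comp, Category.assoc]
      rw [rho_naturality])

/-- the conjugated Isbell functor agrees with the co-nerve -/
def isoRNt : (yoneda ⋙ (whiskeringLeft _ _ (Type u')).obj i.op) ⋙ Ntilde A ≅ NN A i :=
  NatIso.ofComponents (fun k => (dIso A i k).op)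
    (by
      intro k k' f
      apply Quiver.Hom.unop_inj
      ext b (g : k' ⟶ i.obj b)
      show ((yoneda ⋙ (whiskeringLeft _ _ (Type u')).obj i.op)).map f ≫ dEquiv A i k' b g = dEquiv A i k b (f ≫ g)
      rw [dEquiv_apply, dEquiv_apply, Functor.map_comp, Category.assoc])

/-- key identification: composite `R ⋙ O` of the statement is the co-nerve -/
def Theta : (yoneda ⋙ (whiskeringLeft _ _ (Type u')).obj i.op) ⋙ yoneda.leftKanExtension (ysharp A) ≅ NN A i :=
  isoWhiskerLeft ((yoneda ⋙ (whiskeringLeft _ _ (Type u')).obj i.op))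
    (lanIso A) ≪≫ isoRNt A i

end Theta

section Machinery

variable {A} {i} {Fc : K ⥤ (A ⥤ Type u')ᵒᵖ} {G : (A ⥤ Type u')ᵒᵖ ⥤ K}

lemma Fc_lift_exists_unique (Θ : Fc ≅ NN A i) {H' : K ⥤ (A ⥤ Type u')ᵒᵖ}
    (β : i ⋙ H' ⟶ i ⋙ Fc) : ∃! γ : H' ⟶ Fc, whiskerLeft i γ = β := by
  obtain ⟨γ₀, h1, h2⟩ := NN_lift_exists_unique (β ≫ whiskerLeft i Θ.hom)
  refine ⟨γ₀ ≫ Θ.inv, ?_, ?_⟩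
  · show whiskerLeft i (γ₀ ≫ Θ.inv) = β
    rw [whiskerLeft_comp, h1, Category.assoc, ← whiskerLeft_comp, Iso.hom_inv_id,
      whiskerLeft_id', Category.comp_id]
  · intro γ hγ
    have h3 : γ ≫ Θ.hom = γ₀ :=
      h2 _ (by show whiskerLeft i (γ ≫ Θ.hom) = _; rw [whiskerLeft_comp, hγ])
    rw [← h3, Category.assoc, Iso.hom_inv_id, Category.comp_id]

lemma Fc_map_eq (Θ : Fc ≅ NN A i) {k : K} {b : A} (f : k ⟶ i.obj b) :
    Fc.map f = Θ.hom.app k ≫ (NN A i).map f ≫ Θ.inv.app (i.obj b) := by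
  rw [← Category.assoc, ← Θ.hom.naturality f, Category.assoc, Iso.hom_inv_id_app,
    Category.comp_id]

lemma Fc_map_bijective (Θ : Fc ≅ NN A i) (k : K) (b : A) :
    Function.Bijective (fun f : k ⟶ i.obj b => Fc.map f) := by
  constructor
  · intro f f' h
    have h' : Fc.map f = Fc.map f' := h
    rw [Fc_map_eq Θ f, Fc_map_eq Θ f', cancel_epi, cancel_mono] at h'
    exact (NN_map_bijective A i k b).1 h'
  · intro t
    obtain ⟨f, hf⟩ := (NN_map_bijective A i k b).2 (Θ.inv.app k ≫ t ≫ Θ.hom.app (i.obj b))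
    refine ⟨f, ?_⟩
    show Fc.map f = t
    have hf' : (NN A i).map f = Θ.inv.app k ≫ t ≫ Θ.hom.app (i.obj b) := hf
    rw [Fc_map_eq Θ, hf']
    simp only [Category.assoc, Iso.hom_inv_id_app, Category.comp_id]
    rw [← Category.assoc, Iso.hom_inv_id_app, Category.id_comp]

lemma isIso_unit_app (Θ : Fc ≅ NN A i) (adj : Fc ⊣ G) (a : A) :
    IsIso (adj.unit.app (i.obj a)) := by
  apply isIso_of_yoneda_map_bijective
  intro k
  constructor
  · intro x y hxy
    have hx : adj.homEquiv k (Fc.obj (i.obj a)) (Fc.map x)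
        = adj.homEquiv k (Fc.obj (i.obj a)) (Fc.map y) := by
      rw [Adjunction.homEquiv_unit, Adjunction.homEquiv_unit, adj.unit_naturality x,
        adj.unit_naturality y]
      exact hxy
    exact (Fc_map_bijective Θ k a).1 ((adj.homEquiv _ _).injective hx)
  · intro y
    obtain ⟨x, hx⟩ := (Fc_map_bijective Θ k a).2 ((adj.homEquiv k (Fc.obj (i.obj a))).symm y)
    refine ⟨x, ?_⟩
    have hx' : Fc.map x = (adj.homEquiv k (Fc.obj (i.obj a))).symm y := hx
    show x ≫ adj.unit.app (i.obj a) = y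
    conv_rhs => rw [← Equiv.apply_symm_apply (adj.homEquiv k (Fc.obj (i.obj a))) y]
    rw [Adjunction.homEquiv_unit, ← adj.unit_naturality x, hx']

/-- mate along `adj` at the level of endofunctors of `K` -/
def W1 (adj : Fc ⊣ G) (H : K ⥤ K) : (H ⟶ Fc ⋙ G) ≃ ((H ⋙ Fc) ⟶ Fc) where
  toFun γ :=
    { app := fun k => Fc.map (γ.app k) ≫ adj.counit.app (Fc.obj k)
      naturality := by
        intro k k' f
        dsimp
        rw [← Fc.map_comp_assoc, γ.naturality f]
        dsimp
        rw [Fc.map_comp, Category.assoc, adj.counit_naturality]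
        simp }
  invFun ψ :=
    { app := fun k => adj.unit.app (H.obj k) ≫ G.map (ψ.app k)
      naturality := by
        intro k k' f
        dsimp
        rw [← Category.assoc, ← adj.unit_naturality (H.map f), Category.assoc, ← G.map_comp]
        have hn := ψ.naturality f
        simp only [Functor.comp_obj, Functor.comp_map] at hn
        rw [hn, G.map_comp]
        simp }
  left_inv γ := by
    ext k
    dsimp
    rw [G.map_comp, ← Category.assoc, adj.unit_naturality (γ.app k), Category.assoc]
    simp only [Functor.comp_obj]
    rw [adj.right_triangle_components, Category.comp_id]
  right_inv ψ := by
    ext k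
    dsimp
    rw [Fc.map_comp, Category.assoc, adj.counit_naturality, ← Category.assoc,
      adj.left_triangle_components]
    simp

/-- mate along `adj` at the level of functors from `A` -/
def W3 (adj : Fc ⊣ G) (H : K ⥤ K) :
    ((i ⋙ H ⋙ Fc) ⟶ i ⋙ Fc) ≃ ((i ⋙ H) ⟶ i ⋙ (Fc ⋙ G)) where
  toFun ψ :=
    { app := fun a => adj.unit.app (H.obj (i.obj a)) ≫ G.map (ψ.app a)
      naturality := by
        intro a b m
        dsimp
        rw [← Category.assoc, ← adj.unit_naturality (H.map (i.map m)), Category.assoc,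
          ← G.map_comp]
        have hn := ψ.naturality m
        simp only [Functor.comp_obj, Functor.comp_map] at hn
        rw [hn, G.map_comp]
        simp }
  invFun χ :=
    { app := fun a => Fc.map (χ.app a) ≫ adj.counit.app (Fc.obj (i.obj a))
      naturality := by
        intro a b m
        dsimp
        rw [← Fc.map_comp_assoc]
        have hn := χ.naturality m
        simp only [Functor.comp_obj, Functor.comp_map] at hn
        rw [hn]
        rw [Fc.map_comp, Category.assoc, adj.counit_naturality]
        simp }
  left_inv ψ := by
    ext a
    dsimp
    rw [Fc.map_comp, Category.assoc, adj.counit_naturality, ← Category.assoc,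
      adj.left_triangle_components]
    simp
  right_inv χ := by
    ext a
    dsimp
    have hn := adj.unit_naturality (χ.app a)
    simp only [Functor.comp_obj, Functor.comp_map] at hn
    rw [G.map_comp, ← Category.assoc, hn, Category.assoc, adj.right_triangle_components,
      Category.comp_id]

lemma W_spec (adj : Fc ⊣ G) (H : K ⥤ K) (γ : H ⟶ Fc ⋙ G) :
    (W3 adj H) (whiskerLeft i ((W1 adj H) γ)) = whiskerLeft i γ := by
  ext a
  simp only [W1, W3, Equiv.coe_fn_mk, whiskerLeft_app]
  rw [G.map_comp, ← Category.assoc, adj.unit_naturality (γ.app (i.obj a)), Category.assoc]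
  simp only [Functor.comp_obj]
  rw [adj.right_triangle_components, Category.comp_id]

/-- the master lifting property: restriction along `i` of transformations into
the composite `Fc ⋙ G` is bijective -/
lemma master (Θ : Fc ≅ NN A i) (adj : Fc ⊣ G) (H : K ⥤ K)
    (δ : i ⋙ H ⟶ i ⋙ (Fc ⋙ G)) :
    ∃! γ : H ⟶ Fc ⋙ G, whiskerLeft i γ = δ := by
  have e2 : Function.Bijective
      (fun ψ : (H ⋙ Fc) ⟶ Fc => whiskerLeft i ψ) := by
    constructor
    · intro ψ ψ' h
      obtain ⟨γ₀, h1, h2⟩ := Fc_lift_exists_unique Θ (whiskerLeft i ψ)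
      rw [h2 ψ rfl, h2 ψ' h.symm]
    · intro β
      obtain ⟨γ₀, h1, _⟩ := Fc_lift_exists_unique Θ β
      exact ⟨γ₀, h1⟩
  set W : (H ⟶ Fc ⋙ G) ≃ ((i ⋙ H) ⟶ i ⋙ (Fc ⋙ G)) :=
    ((W1 adj H).trans ((Equiv.ofBijective _ e2).trans (W3 adj H))) with hW
  have hWs : ∀ γ, W γ = whiskerLeft i γ := fun γ => W_spec adj H γ
  refine ⟨W.symm δ, ?_, ?_⟩
  · show whiskerLeft i (W.symm δ) = δ
    have h := hWs (W.symm δ)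
    rw [Equiv.apply_symm_apply] at h
    exact h.symm
  · intro γ hγ
    apply W.injective
    rw [Equiv.apply_symm_apply, hWs γ]
    exact hγ

end Machinery

section Final

variable {A} {i}
variable [((yoneda ⋙ (whiskeringLeft _ _ (Type u')).obj i.op)).Full] [((yoneda ⋙ (whiskeringLeft _ _ (Type u')).obj i.op)).Faithful]
  [HasColimitsOfSize.{u', u'} K]

/-- `O ∘ R` of the statement -/
abbrev FcC : K ⥤ (A ⥤ Type u')ᵒᵖ :=
  (yoneda ⋙ (whiskeringLeft _ _ (Type u')).obj i.op) ⋙ yoneda.leftKanExtension (ysharp A)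

/-- `L ∘ Spec` of the statement -/
abbrev GC : (A ⥤ Type u')ᵒᵖ ⥤ K :=
  (ysharp A).rightKanExtension yoneda ⋙ yoneda.leftKanExtension i

variable (adj : FcC (i := i) ⊣ GC (A := A) (i := i))

/-- on the image of `i`, the unit of the composite adjunction is an isomorphism -/
def uIso : i ≅ i ⋙ (FcC (i := i) ⋙ GC (A := A) (i := i)) :=
  haveI : ∀ a, IsIso (adj.unit.app (i.obj a)) :=
    fun a => isIso_unit_app (Theta A i) adj a
  NatIso.ofComponents (fun a => asIso (adj.unit.app (i.obj a)))
    (by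
      intro a b m
      have h := adj.unit.naturality (i.map m)
      simp only [Functor.id_obj, Functor.id_map] at h
      simpa using h)

/-- the candidate counit exhibiting `G ∘ F` as the codensity monad -/
def cC : i ⋙ (FcC (i := i) ⋙ GC (A := A) (i := i)) ⟶ i := (uIso adj).inv

lemma kanFG : (FcC (i := i) ⋙ GC (A := A) (i := i)).IsRightKanExtension (cC adj) := by
  constructor
  refine ⟨IsTerminal.ofUniqueHom (fun Z => ?_) (fun Z m => ?_)⟩
  · refine CostructuredArrow.homMk
      ((master (Theta A i) adj Z.left (Z.hom ≫ (uIso adj).hom)).exists.choose) ?_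
    have hs := (master (Theta A i) adj Z.left (Z.hom ≫ (uIso adj).hom)).exists.choose_spec
    show whiskerLeft i _ ≫ cC adj = Z.hom
    rw [hs]
    simp only [cC]
    rw [Category.assoc, Iso.hom_inv_id, Category.comp_id]
  · apply CostructuredArrow.hom_ext
    have hw := CostructuredArrow.w m
    have hm : whiskerLeft i m.left = Z.hom ≫ (uIso adj).hom := by
        exact (Iso.comp_inv_eq (uIso adj)).1 hw
    have hu := (master (Theta A i) adj Z.left (Z.hom ≫ (uIso adj).hom)).unique hm
      (master (Theta A i) adj Z.left (Z.hom ≫ (uIso adj).hom)).exists.choose_spec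
    exact hu

variable [i.HasPointwiseRightKanExtension i]

/-- comparison map from the codensity monad to the composite monad -/
def PhiHom : i.rightKanExtension i ⟶ (FcC (i := i) ⋙ GC (A := A) (i := i)) :=
  letI := kanFG adj
  (FcC (i := i) ⋙ GC (A := A) (i := i)).liftOfIsRightKanExtension (cC adj)
    (i.rightKanExtension i) (i.rightKanExtensionCounit i)

/-- comparison map from the composite monad to the codensity monad -/
def PhiInv : (FcC (i := i) ⋙ GC (A := A) (i := i)) ⟶ i.rightKanExtension i :=
  (i.rightKanExtension i).liftOfIsRightKanExtension (i.rightKanExtensionCounit i)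
    (FcC (i := i) ⋙ GC (A := A) (i := i)) (cC adj)

lemma PhiHom_fac :
    whiskerLeft i (PhiHom adj) ≫ cC adj = i.rightKanExtensionCounit i :=
  letI := kanFG adj
  (FcC (i := i) ⋙ GC (A := A) (i := i)).liftOfIsRightKanExtension_fac (cC adj) _ _

lemma PhiInv_fac :
    whiskerLeft i (PhiInv adj) ≫ i.rightKanExtensionCounit i = cC adj :=
  (i.rightKanExtension i).liftOfIsRightKanExtension_fac (i.rightKanExtensionCounit i) _ _

/-- the comparison isomorphism between the codensity monad and the composite monad -/
def Phi : i.rightKanExtension i ≅ (FcC (i := i) ⋙ GC (A := A) (i := i)) where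
  hom := PhiHom adj
  inv := PhiInv adj
  hom_inv_id := by
    apply (i.rightKanExtension i).hom_ext_of_isRightKanExtension (i.rightKanExtensionCounit i)
    rw [whiskerLeft_comp, Category.assoc, PhiInv_fac, PhiHom_fac]
    simp
  inv_hom_id := by
    letI := kanFG adj
    apply (FcC (i := i) ⋙ GC (A := A) (i := i)).hom_ext_of_isRightKanExtension (cC adj)
    rw [whiskerLeft_comp, Category.assoc, PhiHom_fac, PhiInv_fac]
    simp

variable [i.HasPointwiseRightKanExtension i]

lemma etaEq : CategoryTheory.Codensity.unit i ≫ PhiHom adj = adj.unit := by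
  letI := kanFG adj
  apply Functor.hom_ext_of_isRightKanExtension _ (cC adj)
  rw [whiskerLeft_comp, Category.assoc, PhiHom_fac]
  ext a
  have h1 := CategoryTheory.Codensity.unit_fac i a
  have h2 : adj.unit.app (i.obj a) ≫ (cC adj).app a = 𝟙 _ := by
    rw [show adj.unit.app (i.obj a) = (uIso adj).hom.app a from rfl]
    exact Iso.hom_inv_id_app (uIso adj) a
  simp only [NatTrans.comp_app, whiskerLeft_app]
  rw [h2]
  exact h1

/-- the multiplication of the monad induced by `adj` -/
def muAdj : (FcC (i := i) ⋙ GC (A := A) (i := i)) ⋙ (FcC (i := i) ⋙ GC (A := A) (i := i))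
    ⟶ (FcC (i := i) ⋙ GC (A := A) (i := i)) where
  app X := (GC (A := A) (i := i)).map (adj.counit.app ((FcC (i := i)).obj X))
  naturality := by
    intro X Y f
    show (GC (A := A) (i := i)).map ((FcC (i := i)).map
        ((GC (A := A) (i := i)).map ((FcC (i := i)).map f)))
      ≫ (GC (A := A) (i := i)).map (adj.counit.app ((FcC (i := i)).obj Y))
      = (GC (A := A) (i := i)).map (adj.counit.app ((FcC (i := i)).obj X))
        ≫ (GC (A := A) (i := i)).map ((FcC (i := i)).map f)
    rw [← Functor.map_comp, ← Functor.map_comp]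
    exact congrArg (fun t => (GC (A := A) (i := i)).map t)
      (adj.counit_naturality ((FcC (i := i)).map f))

lemma muAdj_app (X : K) : (muAdj adj).app X = adj.toMonad.μ.app X := rfl

lemma key1 (a : A) :
    (FcC (i := i)).map ((cC adj).app a) = adj.counit.app ((FcC (i := i)).obj (i.obj a)) := by
  have tri := adj.left_triangle_components (i.obj a)
  have hinv : (cC adj).app a ≫ adj.unit.app (i.obj a) = 𝟙 _ := by
    rw [show adj.unit.app (i.obj a) = (uIso adj).hom.app a from rfl]
    exact Iso.inv_hom_id_app (uIso adj) a
  have h6 : (FcC (i := i)).map ((cC adj).app a ≫ adj.unit.app (i.obj a))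
      ≫ adj.counit.app ((FcC (i := i)).obj (i.obj a))
      = adj.counit.app ((FcC (i := i)).obj (i.obj a)) := by
    rw [hinv, CategoryTheory.Functor.map_id, Category.id_comp]
  rw [← h6, Functor.map_comp, Category.assoc, tri, Category.comp_id]

lemma muEq : CategoryTheory.Codensity.mul i ≫ PhiHom adj
    = whiskerRight (PhiHom adj) (CategoryTheory.Codensity.T i)
      ≫ whiskerLeft (FcC (i := i) ⋙ GC (A := A) (i := i)) (PhiHom adj)
      ≫ muAdj adj := by
  letI := kanFG adj
  apply Functor.hom_ext_of_isRightKanExtension _ (cC adj)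
  ext a
  have fac_a : (PhiHom adj).app (i.obj a) ≫ (cC adj).app a
      = (i.rightKanExtensionCounit i).app a := by
    have h := NatTrans.congr_app (PhiHom_fac adj) a
    simpa using h
  have hmf := CategoryTheory.Codensity.mul_fac i a
  simp only [NatTrans.comp_app, whiskerLeft_app, whiskerRight_app, Functor.comp_obj,
    Category.assoc]
  calc (CategoryTheory.Codensity.mul i).app (i.obj a)
        ≫ (PhiHom adj).app (i.obj a) ≫ (cC adj).app a
      = (CategoryTheory.Codensity.mul i).app (i.obj a)
        ≫ (i.rightKanExtensionCounit i).app a := by rw [fac_a]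
    _ = (CategoryTheory.Codensity.T i).map ((i.rightKanExtensionCounit i).app a)
        ≫ (i.rightKanExtensionCounit i).app a := hmf
    _ = (CategoryTheory.Codensity.T i).map ((i.rightKanExtensionCounit i).app a)
        ≫ (PhiHom adj).app (i.obj a) ≫ (cC adj).app a := by rw [fac_a]
    _ = ((CategoryTheory.Codensity.T i).map ((i.rightKanExtensionCounit i).app a)
        ≫ (PhiHom adj).app (i.obj a)) ≫ (cC adj).app a := by rw [Category.assoc]
    _ = ((PhiHom adj).app ((i ⋙ CategoryTheory.Codensity.T i).obj a)
        ≫ (FcC (i := i) ⋙ GC (A := A) (i := i)).map ((i.rightKanExtensionCounit i).app a))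
          ≫ (cC adj).app a := by rw [(PhiHom adj).naturality ((i.rightKanExtensionCounit i).app a)]
    _ = (PhiHom adj).app ((i ⋙ CategoryTheory.Codensity.T i).obj a)
        ≫ (FcC (i := i) ⋙ GC (A := A) (i := i)).map
            ((PhiHom adj).app (i.obj a) ≫ (cC adj).app a)
          ≫ (cC adj).app a := by rw [fac_a, Category.assoc]
    _ = (PhiHom adj).app ((i ⋙ CategoryTheory.Codensity.T i).obj a)
        ≫ ((FcC (i := i) ⋙ GC (A := A) (i := i)).map ((PhiHom adj).app (i.obj a))
          ≫ (FcC (i := i) ⋙ GC (A := A) (i := i)).map ((cC adj).app a))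
          ≫ (cC adj).app a := by rw [Functor.map_comp]
    _ = ((PhiHom adj).app ((i ⋙ CategoryTheory.Codensity.T i).obj a)
        ≫ (FcC (i := i) ⋙ GC (A := A) (i := i)).map ((PhiHom adj).app (i.obj a)))
          ≫ (FcC (i := i) ⋙ GC (A := A) (i := i)).map ((cC adj).app a)
          ≫ (cC adj).app a := by simp only [Category.assoc]
    _ = ((CategoryTheory.Codensity.T i).map ((PhiHom adj).app (i.obj a))
        ≫ (PhiHom adj).app ((FcC (i := i) ⋙ GC (A := A) (i := i)).obj (i.obj a)))
          ≫ (FcC (i := i) ⋙ GC (A := A) (i := i)).map ((cC adj).app a)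
          ≫ (cC adj).app a := by
            rw [(PhiHom adj).naturality ((PhiHom adj).app (i.obj a))]
            rfl
    _ = ((CategoryTheory.Codensity.T i).map ((PhiHom adj).app (i.obj a))
        ≫ (PhiHom adj).app ((FcC (i := i) ⋙ GC (A := A) (i := i)).obj (i.obj a)))
          ≫ (muAdj adj).app (i.obj a) ≫ (cC adj).app a := by
            congr 2
            show (GC (A := A) (i := i)).map ((FcC (i := i)).map ((cC adj).app a)) = _
            rw [key1 adj a]
            rfl
    _ = (CategoryTheory.Codensity.T i).map ((PhiHom adj).app (i.obj a))
        ≫ (PhiHom adj).app ((FcC (i := i) ⋙ GC (A := A) (i := i)).obj (i.obj a))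
          ≫ (muAdj adj).app (i.obj a) ≫ (cC adj).app a := by simp only [Category.assoc]

end Final
end IsbellAux

theorem codensityMonad_of_dense_subcategory_induced_by_isbell
    (A : Type u') [SmallCategory A] {K : Type v'} [Category.{u'} K]
    [HasColimitsOfSize.{u', u'} K]
    -- `i` is a full subcategory of `K` ...
    (i : A ⥤ K) [i.Full] [i.Faithful]
    -- ... which is dense, i.e. the nerve `K(i-,-)` is fully faithful:
    [((yoneda ⋙ (whiskeringLeft _ _ (Type u')).obj i.op)).Full] [((yoneda ⋙ (whiskeringLeft _ _ (Type u')).obj i.op)).Faithful]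
    -- the codensity monad of `i` exists pointwise (`K` is also complete):
    [i.HasPointwiseRightKanExtension i]
    -- any adjunction `O ∘ R ⊣ L ∘ Spec` obtained by composition with the Isbell adjunction:
    (adj : ((yoneda ⋙ (whiskeringLeft _ _ (Type u')).obj i.op) ⋙ yoneda.leftKanExtension (ysharp A)) ⊣
      ((ysharp A).rightKanExtension yoneda ⋙ yoneda.leftKanExtension i)) :
    Nonempty (codensityMonad i ≅ adj.toMonad) := by
  refine ⟨MonadIso.mk (IsbellAux.Phi adj) (fun X => ?_) (fun X => ?_)⟩
  · exact NatTrans.congr_app (IsbellAux.etaEq adj) X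
  · have h := NatTrans.congr_app (IsbellAux.muEq adj) X
    simp only [NatTrans.comp_app, whiskerRight_app, whiskerLeft_app, Functor.comp_obj] at h
    rw [show (adj.toMonad.μ).app X = (IsbellAux.muAdj adj).app X from rfl]
    exact h.trans (Category.assoc _ _ _).symm


end
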